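/- For any partition λ, the K-standardization map Φ restricts to a bijection from the set QYGen(λ) of quasiYamanouchi genomic tableaux of shape λ onto the set Inc_gl(λ) of gapless increasing tableaux of shape λ. -/

import Mathlib

open scoped Classical

/-- The cell `x = (row, column)` (0-indexed, English orientation) lies in the Young diagram
whose `r`-th row has length `lam r`. -/
def InShape (lam : ℕ → ℕ) (x : ℕ × ℕ) : Prop := x.2 < lam x.1

/-- `lam : ℕ → ℕ` is the row-length function of a partition: weakly decreasing and
eventually zero. -/
def IsPartitionFn (lam : ℕ → ℕ) : Prop := Antitone lam ∧ ∃ N, ∀ n, N ≤ n → lam n = 0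

/-- A genomic tableau of shape `lam`: a semistandard filling (positive entries, rows weakly
increasing left-to-right, columns strictly increasing top-to-bottom) together with, for each
`i`, a partition of the boxes labeled `i` into genes, encoded by the relation `sameGene`.
Boxes in a common gene share their entry; if a gene has boxes (necessarily with a common
entry) in columns `c₁ < c₃`, then every box with the same entry in an intervening column
belongs to the same gene; and no gene has two boxes in a common row.  Entries and the
relation are normalized (to `0`, resp. `False`) outside the shape so that equality of
structures agrees with equality of tableaux. -/
structure GenomicTableau (lam : ℕ → ℕ) where
  entry : ℕ × ℕ → ℕ
  sameGene : ℕ × ℕ → ℕ × ℕ → Prop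
  entry_pos : ∀ x, InShape lam x → 0 < entry x
  entry_zero : ∀ x, ¬ InShape lam x → entry x = 0
  row_weak : ∀ r c₁ c₂, c₁ ≤ c₂ → InShape lam (r, c₂) → entry (r, c₁) ≤ entry (r, c₂)
  col_strict : ∀ r₁ r₂ c, r₁ < r₂ → InShape lam (r₂, c) → entry (r₁, c) < entry (r₂, c)
  sameGene_mem : ∀ x y, sameGene x y → InShape lam x ∧ InShape lam y
  sameGene_refl : ∀ x, InShape lam x → sameGene x x
  sameGene_symm : ∀ x y, sameGene x y → sameGene y x
  sameGene_trans : ∀ x y z, sameGene x y → sameGene y z → sameGene x z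
  sameGene_entry : ∀ x y, sameGene x y → entry x = entry y
  sameGene_interval : ∀ x y z, sameGene x z → InShape lam y → entry y = entry x →
    x.2 < y.2 → y.2 < z.2 → sameGene x y
  sameGene_row : ∀ x y, sameGene x y → x.1 = y.1 → x = y

/-- `x` is the leftmost box of its gene in the genomic tableau `T`. -/
def IsGeneLeader {lam : ℕ → ℕ} (T : GenomicTableau lam) (x : ℕ × ℕ) : Prop :=
  InShape lam x ∧ ∀ y, T.sameGene x y → x.2 ≤ y.2

/-- The number of `(n+1)`-genes of `T` (counted via their leftmost boxes).  Thus `wt T` is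
the weight of `T` as a weak composition indexed from `0`: the variable `x_n` records
`(n+1)`-genes. -/
noncomputable def wt {lam : ℕ → ℕ} (T : GenomicTableau lam) (n : ℕ) : ℕ :=
  {x | IsGeneLeader T x ∧ T.entry x = n + 1}.ncard

/-- The largest entry of the genomic tableau `T`. -/
noncomputable def maxEntry {lam : ℕ → ℕ} (T : GenomicTableau lam) : ℕ :=
  sSup {n | ∃ x, InShape lam x ∧ T.entry x = n}

/-- The positive part of the weight of `T`: the list of nonzero components of `wt T`,
in order. -/
noncomputable def wtPos {lam : ℕ → ℕ} (T : GenomicTableau lam) : List ℕ :=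
  ((List.range (maxEntry T)).map (wt T)).filter (fun e => decide (0 < e))

/-- The (strong) composition `β` refines `α` if `α` is obtained from `β` by summing
consecutive blocks. -/
def Refines (β α : List ℕ) : Prop :=
  ∃ L : List (List ℕ), L.flatten = β ∧ L.map List.sum = α

/-- The positive part of a weak composition `m`: the list of its nonzero values in order of
the index. -/
noncomputable def posPart (m : ℕ →₀ ℕ) : List ℕ :=
  (m.support.sort (· ≤ ·)).map (fun i => m i)

/-- The fundamental quasisymmetric function `F_α`, a power series in variables indexed
by `ℕ`: the sum of `x^m` over all weak compositions `m` whose positive part refines `α`. -/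
noncomputable def fundamentalF (α : List ℕ) : MvPowerSeries ℕ ℤ :=
  fun m : ℕ →₀ ℕ => if Refines (posPart m) α then 1 else 0

/-- The genomic Schur function `U_lam`: the coefficient of `x^m` is the number of genomic
tableaux of shape `lam` with weight `m`. -/
noncomputable def genomicSchur (lam : ℕ → ℕ) : MvPowerSeries ℕ ℤ :=
  fun m : ℕ →₀ ℕ => (Nat.card {T : GenomicTableau lam // ∀ n, wt T n = m n} : ℤ)

/-- A genomic tableau is quasiYamanouchi if for every `i > 1` appearing in it, some
instance of `i` is weakly west of some instance of `i-1`. -/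
def IsQY {lam : ℕ → ℕ} (T : GenomicTableau lam) : Prop :=
  ∀ i, 2 ≤ i → (∃ x, InShape lam x ∧ T.entry x = i) →
    ∃ x y, InShape lam x ∧ InShape lam y ∧
      T.entry x = i ∧ T.entry y = i - 1 ∧ x.2 ≤ y.2

/-- One step of the regularization algorithm: if `i ≥ 2` appears in `T` and every box
labeled `i` is strictly east of every box labeled `i-1`, replace every label `i` by `i-1`,
keeping the gene decomposition. -/
def RegStep {lam : ℕ → ℕ} (T T' : GenomicTableau lam) : Prop :=
  ∃ i, 2 ≤ i ∧ (∃ x, InShape lam x ∧ T.entry x = i) ∧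
    (∀ x y, InShape lam x → InShape lam y → T.entry x = i → T.entry y = i - 1 → y.2 < x.2) ∧
    (∀ x, T'.entry x = if T.entry x = i then i - 1 else T.entry x) ∧
    (∀ x y, T'.sameGene x y ↔ T.sameGene x y)

/-- An increasing tableau of shape `lam`: positive entries, strictly increasing along rows
and down columns, normalized to `0` outside the shape. -/
structure IncreasingTableau (lam : ℕ → ℕ) where
  entry : ℕ × ℕ → ℕ
  entry_pos : ∀ x, InShape lam x → 0 < entry x
  entry_zero : ∀ x, ¬ InShape lam x → entry x = 0
  row_strict : ∀ r c₁ c₂, c₁ < c₂ → InShape lam (r, c₂) → entry (r, c₁) < entry (r, c₂)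
  col_strict : ∀ r₁ r₂ c, r₁ < r₂ → InShape lam (r₂, c) → entry (r₁, c) < entry (r₂, c)

/-- The largest entry of the increasing tableau `T`. -/
noncomputable def maxEntryInc {lam : ℕ → ℕ} (T : IncreasingTableau lam) : ℕ :=
  sSup {n | ∃ x, InShape lam x ∧ T.entry x = n}

/-- An increasing tableau is gapless if its set of entries is `{1, …, n}` for some `n`. -/
def Gapless {lam : ℕ → ℕ} (T : IncreasingTableau lam) : Prop :=
  ∀ i, 0 < i → i ≤ maxEntryInc T → ∃ x, InShape lam x ∧ T.entry x = i

/-- `i` is a descent of the increasing tableau `T` if some instance of `i` lies in a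
strictly higher row than some instance of `i+1`. -/
def IsDescent {lam : ℕ → ℕ} (T : IncreasingTableau lam) (i : ℕ) : Prop :=
  ∃ x y, InShape lam x ∧ InShape lam y ∧ T.entry x = i ∧ T.entry y = i + 1 ∧ x.1 < y.1

/-- The descent composition of a gapless increasing tableau with entries `{1, …, n}`:
the lengths of the segments of the word `1 2 ⋯ n` cut after each descent. -/
noncomputable def descComp {lam : ℕ → ℕ} (T : IncreasingTableau lam) : List ℕ :=
  let n := maxEntryInc T
  let ds := (((Finset.range n).filter fun i => IsDescent T i).sort (· ≤ ·)) ++ [n]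
  (ds.zip (0 :: ds)).map fun p => p.1 - p.2

/-- A standard Young tableau, viewed as an increasing tableau: gapless with all entries
distinct (so the entries are `1, …, |lam|`, each exactly once). -/
def IsStandard {lam : ℕ → ℕ} (T : IncreasingTableau lam) : Prop :=
  Gapless T ∧ ∀ x y, InShape lam x → InShape lam y → T.entry x = T.entry y → x = y

/-- The column of the leftmost box of the gene of `x` in `T`. -/
noncomputable def leadCol {lam : ℕ → ℕ} (T : GenomicTableau lam) (x : ℕ × ℕ) : ℕ :=
  sInf {c | ∃ y, T.sameGene x y ∧ y.2 = c}

/-- K-standardization `Φ`: order the genes of `T` by listing the `1`-genes left to right,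
then the `2`-genes left to right, and so on; `kStd T x` is the (1-based) position of the
gene of `x` in this order (and `0` outside the shape). -/
noncomputable def kStd {lam : ℕ → ℕ} (T : GenomicTableau lam) (x : ℕ × ℕ) : ℕ :=
  if InShape lam x then
    {y | IsGeneLeader T y ∧ (T.entry y < T.entry x ∨
        (T.entry y = T.entry x ∧ y.2 ≤ leadCol T x))}.ncard
  else 0

/-- A semistandard tableau of shape `lam`, with positive entries, normalized to `0`
outside the shape. -/
structure SemistandardTableau (lam : ℕ → ℕ) where
  entry : ℕ × ℕ → ℕ
  entry_pos : ∀ x, InShape lam x → 0 < entry x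
  entry_zero : ∀ x, ¬ InShape lam x → entry x = 0
  row_weak : ∀ r c₁ c₂, c₁ ≤ c₂ → InShape lam (r, c₂) → entry (r, c₁) ≤ entry (r, c₂)
  col_strict : ∀ r₁ r₂ c, r₁ < r₂ → InShape lam (r₂, c) → entry (r₁, c) < entry (r₂, c)

/-- The number of boxes of `T` with entry `n+1` (matching the variable convention of
`wt`: the variable `x_n` records the entry `n+1`). -/
noncomputable def contentOf {lam : ℕ → ℕ} (T : SemistandardTableau lam) (n : ℕ) : ℕ :=
  {x | InShape lam x ∧ T.entry x = n + 1}.ncard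

/-- The Schur function `s_mu` as the generating function of semistandard tableaux of
shape `mu` by content. -/
noncomputable def schurFn (mu : ℕ → ℕ) : MvPowerSeries ℕ ℤ :=
  fun m : ℕ →₀ ℕ => (Nat.card {T : SemistandardTableau mu // ∀ n, contentOf T n = m n} : ℤ)

/-- The row-length function of the flag-shaped partition `(a, b, 1^k)`. -/
def flagShape (a b k : ℕ) : ℕ → ℕ :=
  fun r => if r = 0 then a else if r = 1 then b else if r < k + 2 then 1 else 0

/-- The homogeneous component of degree `d` of a power series. -/
noncomputable def homComponent (d : ℕ) (f : MvPowerSeries ℕ ℤ) : MvPowerSeries ℕ ℤ :=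
  fun m : ℕ →₀ ℕ => if (m.sum fun _ e => e) = d then MvPowerSeries.coeff m f else 0

/-- The complete homogeneous symmetric function `h_k` (`h_0 = 1`, and `h_k = 0` for
`k < 0`): the sum of all monomials of total degree `k`. -/
noncomputable def hSeries (k : ℤ) : MvPowerSeries ℕ ℤ :=
  fun m : ℕ →₀ ℕ => if ((m.sum fun _ e => e : ℕ) : ℤ) = k then 1 else 0

/-- The Schur function of an arbitrary (strong) composition `α`, via the Jacobi–Trudi
determinant `s_α = det(h_{α_i - i + j})`. -/
noncomputable def schurComp (α : List ℕ) : MvPowerSeries ℕ ℤ :=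
  Matrix.det (Matrix.of fun i j : Fin α.length =>
    hSeries ((α.get i : ℤ) - (i : ℕ) + (j : ℕ)))

/-- `e` lies in the `i`-th block (0-indexed) `M_{i+1}(α) = {α_1 + ⋯ + α_i + 1, …,
α_1 + ⋯ + α_{i+1}}` of the composition `α`. -/
def InBlock (α : List ℕ) (i : ℕ) (e : ℕ) : Prop :=
  (α.take i).sum < e ∧ e ≤ (α.take (i + 1)).sum

/-- The positive part of a weak composition of length `n`. -/
noncomputable def posPartFin {n : ℕ} (m : Fin n →₀ ℕ) : List ℕ :=
  (List.ofFn fun k : Fin n => m k).filter (fun e => decide (0 < e))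

/-- The fundamental quasisymmetric polynomial `F_α(x_1, …, x_n)` in `n` variables. -/
noncomputable def fundamentalFFin (n : ℕ) (α : List ℕ) : MvPowerSeries (Fin n) ℤ :=
  fun m : Fin n →₀ ℕ => if Refines (posPartFin m) α then 1 else 0

/-- The genomic Schur polynomial `U_lam(x_1, …, x_n)`: the generating function of genomic
tableaux with all entries at most `n`, by weight. -/
noncomputable def genomicSchurPoly (lam : ℕ → ℕ) (n : ℕ) : MvPowerSeries (Fin n) ℤ :=
  fun m : Fin n →₀ ℕ =>
    (Nat.card {T : GenomicTableau lam //
      (∀ x, InShape lam x → T.entry x ≤ n) ∧ ∀ k : Fin n, wt T (k : ℕ) = m k} : ℤ)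

section KStdProof

variable {lam : ℕ → ℕ}

lemma shape_finite (hlam : IsPartitionFn lam) : {x : ℕ × ℕ | InShape lam x}.Finite := by
  obtain ⟨hmono, N, hN⟩ := hlam
  apply Set.Finite.subset ((Set.finite_Iio N).prod (Set.finite_Iio (lam 0)))
  rintro ⟨r, c⟩ hx
  have hx' : c < lam r := hx
  have hrN : r < N := by
    by_contra h
    push_neg at h
    have := hN r h
    omega
  exact Set.mem_prod.mpr ⟨hrN, lt_of_lt_of_le hx' (hmono (Nat.zero_le r))⟩

lemma inShape_left {r c c' : ℕ} (h : c' ≤ c) (hc : InShape lam (r, c)) : InShape lam (r, c') :=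
  lt_of_le_of_lt h hc

variable {T : GenomicTableau lam}

/-- Lemma A: in-shape boxes with equal entries in the same column coincide. -/
lemma eq_of_entry_col {x y : ℕ × ℕ} (hx : InShape lam x) (hy : InShape lam y)
    (he : T.entry x = T.entry y) (hc : x.2 = y.2) : x = y := by
  obtain ⟨a, b⟩ := x
  obtain ⟨c, d⟩ := y
  simp only at hc
  subst hc
  rcases lt_trichotomy a c with h | h | h
  · have := T.col_strict a c b h hy
    omega
  · rw [h]
  · have := T.col_strict c a b h hx
    omega

/-- Lemma B: bigger entry weakly west implies strictly lower. -/
lemma row_lt_of_entry_lt {u v : ℕ × ℕ} (hu : InShape lam u) (hv : InShape lam v)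
    (he : T.entry u < T.entry v) (hc : v.2 ≤ u.2) : u.1 < v.1 := by
  obtain ⟨a, b⟩ := u
  obtain ⟨c, d⟩ := v
  simp only at hc ⊢
  by_contra h
  push_neg at h
  have hm : InShape lam (a, d) := inShape_left hc hu
  rcases eq_or_lt_of_le h with h' | h'
  · rw [h'] at he
    have := T.row_weak a d b hc hu
    omega
  · have h1 := T.col_strict c a d h' hm
    have h2 := T.row_weak a d b hc hu
    omega

lemma exists_leader {x : ℕ × ℕ} (hx : InShape lam x) :
    ∃ l, T.sameGene x l ∧ ∀ y, T.sameGene x y → l.2 ≤ y.2 := by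
  have hne : {c | ∃ y, T.sameGene x y ∧ y.2 = c}.Nonempty :=
    ⟨x.2, x, T.sameGene_refl x hx, rfl⟩
  obtain ⟨l, hl, hlc⟩ := Nat.sInf_mem hne
  exact ⟨l, hl, fun y hy => by
    rw [hlc]
    exact Nat.sInf_le ⟨y, hy, rfl⟩⟩

noncomputable def ldr (T : GenomicTableau lam) (x : ℕ × ℕ) : ℕ × ℕ :=
  if h : InShape lam x then (exists_leader (T := T) h).choose else x

lemma ldr_sameGene {x : ℕ × ℕ} (hx : InShape lam x) : T.sameGene x (ldr T x) := by
  rw [ldr, dif_pos hx]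
  exact (exists_leader hx).choose_spec.1

lemma ldr_min {x : ℕ × ℕ} (hx : InShape lam x) : ∀ y, T.sameGene x y → (ldr T x).2 ≤ y.2 := by
  rw [ldr, dif_pos hx]
  exact (exists_leader hx).choose_spec.2

lemma ldr_entry {x : ℕ × ℕ} (hx : InShape lam x) : T.entry (ldr T x) = T.entry x :=
  (T.sameGene_entry _ _ (ldr_sameGene hx)).symm

lemma ldr_mem {x : ℕ × ℕ} (hx : InShape lam x) : InShape lam (ldr T x) :=
  (T.sameGene_mem _ _ (ldr_sameGene hx)).2

lemma ldr_isLeader {x : ℕ × ℕ} (hx : InShape lam x) : IsGeneLeader T (ldr T x) := by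
  refine ⟨ldr_mem hx, fun y hy => ?_⟩
  exact ldr_min hx y (T.sameGene_trans _ _ _ (ldr_sameGene hx) hy)

lemma ldr_eq_of_sameGene {x y : ℕ × ℕ} (h : T.sameGene x y) : ldr T x = ldr T y := by
  have hx := (T.sameGene_mem _ _ h).1
  have hy := (T.sameGene_mem _ _ h).2
  have h1 : T.sameGene x (ldr T y) := T.sameGene_trans _ _ _ h (ldr_sameGene hy)
  have h2 : T.sameGene y (ldr T x) :=
    T.sameGene_trans _ _ _ (T.sameGene_symm _ _ h) (ldr_sameGene hx)
  have hc1 : (ldr T x).2 ≤ (ldr T y).2 := ldr_min hx _ h1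
  have hc2 : (ldr T y).2 ≤ (ldr T x).2 := ldr_min hy _ h2
  exact eq_of_entry_col (ldr_mem hx) (ldr_mem hy)
    (by rw [ldr_entry hx, ldr_entry hy, T.sameGene_entry _ _ h]) (le_antisymm hc1 hc2)

lemma ldr_of_leader {y : ℕ × ℕ} (hy : IsGeneLeader T y) : ldr T y = y := by
  have h1 : (ldr T y).2 ≤ y.2 := ldr_min hy.1 y (T.sameGene_refl y hy.1)
  have h2 : y.2 ≤ (ldr T y).2 := hy.2 _ (ldr_sameGene hy.1)
  exact eq_of_entry_col (ldr_mem hy.1) hy.1 (ldr_entry hy.1) (le_antisymm h1 h2)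

lemma leadCol_eq {x : ℕ × ℕ} (hx : InShape lam x) : leadCol T x = (ldr T x).2 := by
  apply le_antisymm
  · exact Nat.sInf_le ⟨ldr T x, ldr_sameGene hx, rfl⟩
  · have hne : {c | ∃ y, T.sameGene x y ∧ y.2 = c}.Nonempty :=
      ⟨x.2, x, T.sameGene_refl x hx, rfl⟩
    obtain ⟨y, hy, hyc⟩ := Nat.sInf_mem hne
    rw [leadCol, ← hyc]
    exact ldr_min hx y hy

/-- The gene order on boxes: by entry, then by column. -/
def GLt (T : GenomicTableau lam) (y z : ℕ × ℕ) : Prop :=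
  T.entry y < T.entry z ∨ (T.entry y = T.entry z ∧ y.2 < z.2)

lemma GLt.trans' {x y z : ℕ × ℕ} (h1 : GLt T x y) (h2 : GLt T y z) : GLt T x z := by
  rcases h1 with h1 | ⟨h1, h1'⟩ <;> rcases h2 with h2 | ⟨h2, h2'⟩
  · exact Or.inl (h1.trans h2)
  · exact Or.inl (h2 ▸ h1)
  · exact Or.inl (h1 ▸ h2)
  · exact Or.inr ⟨h1.trans h2, h1'.trans h2'⟩

lemma GLt.irrefl' {x : ℕ × ℕ} (h : GLt T x x) : False := by
  rcases h with h | ⟨_, h⟩ <;> omega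

lemma GLt.asymm' {x y : ℕ × ℕ} (h1 : GLt T x y) (h2 : GLt T y x) : False := by
  rcases h1 with h1 | ⟨h1, h1'⟩ <;> rcases h2 with h2 | ⟨h2, h2'⟩ <;> omega

lemma GLt.trichotomy {x y : ℕ × ℕ} (hx : InShape lam x) (hy : InShape lam y) :
    x = y ∨ GLt T x y ∨ GLt T y x := by
  rcases lt_trichotomy (T.entry x) (T.entry y) with h | h | h
  · exact Or.inr (Or.inl (Or.inl h))
  · rcases lt_trichotomy x.2 y.2 with h' | h' | h'
    · exact Or.inr (Or.inl (Or.inr ⟨h, h'⟩))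
    · exact Or.inl (eq_of_entry_col hx hy h h')
    · exact Or.inr (Or.inr (Or.inr ⟨h.symm, h'⟩))
  · exact Or.inr (Or.inr (Or.inl h))

/-- The set of gene leaders strictly preceding `y` in the gene order. -/
def rkSet (T : GenomicTableau lam) (y : ℕ × ℕ) : Set (ℕ × ℕ) :=
  {z | IsGeneLeader T z ∧ GLt T z y}

/-- The rank of a leader in the gene order. -/
noncomputable def rk (T : GenomicTableau lam) (y : ℕ × ℕ) : ℕ := (rkSet T y).ncard

/-- The number of genes. -/
noncomputable def nG (T : GenomicTableau lam) : ℕ := {y | IsGeneLeader T y}.ncard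

lemma leaders_finite (hlam : IsPartitionFn lam) : {y | IsGeneLeader T y}.Finite :=
  (shape_finite hlam).subset fun _ h => h.1

lemma rkSet_finite (hlam : IsPartitionFn lam) (y : ℕ × ℕ) : (rkSet T y).Finite :=
  (leaders_finite hlam).subset fun _ h => h.1

lemma rk_lt_rk (hlam : IsPartitionFn lam) {y z : ℕ × ℕ} (hy : IsGeneLeader T y)
    (h : GLt T y z) : rk T y < rk T z := by
  apply Set.ncard_lt_ncard _ (rkSet_finite hlam z)
  constructor
  · exact fun w ⟨hw, hw'⟩ => ⟨hw, hw'.trans' h⟩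
  · intro hsub
    exact GLt.irrefl' (hsub ⟨hy, h⟩).2

lemma rk_lt_nG (hlam : IsPartitionFn lam) {y : ℕ × ℕ} (hy : IsGeneLeader T y) :
    rk T y < nG T := by
  apply Set.ncard_lt_ncard _ (leaders_finite hlam)
  constructor
  · exact fun w hw => hw.1
  · intro hsub
    exact GLt.irrefl' (hsub hy).2

lemma rk_injOn (hlam : IsPartitionFn lam) {y z : ℕ × ℕ} (hy : IsGeneLeader T y)
    (hz : IsGeneLeader T z) (h : rk T y = rk T z) : y = z := by
  rcases GLt.trichotomy (T := T) hy.1 hz.1 with h' | h' | h'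
  · exact h'
  · exact absurd h (rk_lt_rk hlam hy h').ne
  · exact absurd h.symm (rk_lt_rk hlam hz h').ne

lemma exists_rk_eq (hlam : IsPartitionFn lam) {k : ℕ} (hk : k < nG T) :
    ∃ y, IsGeneLeader T y ∧ rk T y = k := by
  have hL : {y | IsGeneLeader T y}.Finite := leaders_finite hlam
  have hinj : Set.InjOn (rk T) {y | IsGeneLeader T y} := fun y hy z hz h =>
    rk_injOn hlam hy hz h
  have himg : rk T '' {y | IsGeneLeader T y} ⊆ ↑(Finset.range (nG T)) := by
    rintro k ⟨y, hy, rfl⟩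
    simp only [Finset.coe_range, Set.mem_Iio]
    exact rk_lt_nG hlam hy
  have hcard : (↑(Finset.range (nG T)) : Set ℕ).ncard ≤ (rk T '' {y | IsGeneLeader T y}).ncard := by
    rw [Set.ncard_image_of_injOn hinj, Set.ncard_coe_finset, Finset.card_range]
    rfl
  have heq := Set.eq_of_subset_of_ncard_le himg hcard (Finset.finite_toSet _)
  have : k ∈ rk T '' {y | IsGeneLeader T y} := by
    rw [heq]
    simpa using hk
  obtain ⟨y, hy, hyk⟩ := this
  exact ⟨y, hy, hyk⟩

lemma kStd_eq (hlam : IsPartitionFn lam) {x : ℕ × ℕ} (hx : InShape lam x) :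
    kStd T x = rk T (ldr T x) + 1 := by
  rw [kStd, if_pos hx]
  have hset : {y | IsGeneLeader T y ∧ (T.entry y < T.entry x ∨
      (T.entry y = T.entry x ∧ y.2 ≤ leadCol T x))} = insert (ldr T x) (rkSet T (ldr T x)) := by
    ext y
    simp only [Set.mem_setOf_eq, Set.mem_insert_iff, rkSet, leadCol_eq hx]
    constructor
    · rintro ⟨hy, h | ⟨he, hc⟩⟩
      · exact Or.inr ⟨hy, Or.inl (by rw [ldr_entry hx]; exact h)⟩
      · rcases lt_or_eq_of_le hc with hc' | hc'
        · exact Or.inr ⟨hy, Or.inr ⟨by rw [ldr_entry hx]; exact he, hc'⟩⟩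
        · exact Or.inl (eq_of_entry_col hy.1 (ldr_mem hx) (by rw [ldr_entry hx]; exact he) hc')
    · rintro (rfl | ⟨hy, h | ⟨he, hc⟩⟩)
      · exact ⟨ldr_isLeader hx, Or.inr ⟨ldr_entry hx, le_refl _⟩⟩
      · exact ⟨hy, Or.inl (by rw [ldr_entry hx] at h; exact h)⟩
      · exact ⟨hy, Or.inr ⟨by rw [ldr_entry hx] at he; exact he, le_of_lt hc⟩⟩
  rw [hset, Set.ncard_insert_of_notMem (fun h => GLt.irrefl' h.2) (rkSet_finite hlam _),
    rk]

lemma kStd_pos (hlam : IsPartitionFn lam) {x : ℕ × ℕ} (hx : InShape lam x) :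
    1 ≤ kStd T x := by
  rw [kStd_eq hlam hx]; omega

lemma kStd_le_nG (hlam : IsPartitionFn lam) {x : ℕ × ℕ} (hx : InShape lam x) :
    kStd T x ≤ nG T := by
  rw [kStd_eq hlam hx]
  exact rk_lt_nG hlam (ldr_isLeader hx)

lemma exists_kStd_eq (hlam : IsPartitionFn lam) {k : ℕ} (hk1 : 1 ≤ k) (hk : k ≤ nG T) :
    ∃ x, InShape lam x ∧ kStd T x = k := by
  obtain ⟨y, hy, hyk⟩ := exists_rk_eq (T := T) hlam (k := k - 1) (by omega)
  refine ⟨y, hy.1, ?_⟩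
  rw [kStd_eq hlam hy.1, ldr_of_leader hy, hyk]
  omega

lemma sameGene_iff_kStd (hlam : IsPartitionFn lam) {x y : ℕ × ℕ} (hx : InShape lam x)
    (hy : InShape lam y) : T.sameGene x y ↔ kStd T x = kStd T y := by
  constructor
  · intro h
    rw [kStd_eq hlam hx, kStd_eq hlam hy, ldr_eq_of_sameGene h]
  · intro h
    rw [kStd_eq hlam hx, kStd_eq hlam hy] at h
    have : ldr T x = ldr T y :=
      rk_injOn hlam (ldr_isLeader hx) (ldr_isLeader hy) (by omega)
    exact T.sameGene_trans _ _ _ (ldr_sameGene hx)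
      (this ▸ T.sameGene_symm _ _ (ldr_sameGene hy))

lemma qy_appears_down (hQY : IsQY T) :
    ∀ d i, 1 ≤ i → (∃ x, InShape lam x ∧ T.entry x = i + d) →
      ∃ x, InShape lam x ∧ T.entry x = i := by
  intro d
  induction d with
  | zero => intro i _ h; simpa using h
  | succ d ih =>
    intro i hi h
    apply ih i hi
    obtain ⟨x, y, _, hy, _, hye, _⟩ := hQY (i + d + 1) (by omega) (by
      obtain ⟨x, hx, hxe⟩ := h
      exact ⟨x, hx, by omega⟩)
    exact ⟨y, hy, by omega⟩

lemma qy_appears_of_le (hQY : IsQY T) {i j : ℕ} (h1 : 1 ≤ i) (hij : i ≤ j)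
    (hj : ∃ x, InShape lam x ∧ T.entry x = j) : ∃ x, InShape lam x ∧ T.entry x = i := by
  have : j = i + (j - i) := by omega
  exact qy_appears_down hQY (j - i) i h1 (this ▸ hj)

/-- Key ordering comparison used for row/column strictness of `kStd`. -/
lemma glt_ldr_row (hlam : IsPartitionFn lam) {r c₁ c₂ : ℕ} (hc : c₁ < c₂)
    (hy : InShape lam (r, c₂)) : GLt T (ldr T (r, c₁)) (ldr T (r, c₂)) := by
  have hx : InShape lam (r, c₁) := inShape_left (le_of_lt hc) hy
  have hle : T.entry (r, c₁) ≤ T.entry (r, c₂) := T.row_weak r c₁ c₂ (le_of_lt hc) hy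
  rcases lt_or_eq_of_le hle with h | h
  · exact Or.inl (by rw [ldr_entry hx, ldr_entry hy]; exact h)
  · refine Or.inr ⟨by rw [ldr_entry hx, ldr_entry hy]; exact h, ?_⟩
    have h1 : (ldr T (r, c₁)).2 ≤ c₁ := ldr_min hx _ (T.sameGene_refl _ hx)
    have h2 : c₁ < (ldr T (r, c₂)).2 := by
      by_contra hcon
      push_neg at hcon
      have hsg : T.sameGene (r, c₁) (r, c₂) := by
        rcases lt_or_eq_of_le hcon with h' | h'
        · have hmid := T.sameGene_interval (ldr T (r, c₂)) (r, c₁) (r, c₂)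
            (T.sameGene_symm _ _ (ldr_sameGene hy)) hx
            (by rw [ldr_entry hy]; exact h) h' hc
          exact T.sameGene_trans _ _ _ (T.sameGene_symm _ _ hmid)
            (T.sameGene_symm _ _ (ldr_sameGene hy))
        · have heq : ldr T (r, c₂) = (r, c₁) :=
            eq_of_entry_col (ldr_mem hy) hx (by rw [ldr_entry hy]; exact h.symm) h'
          exact T.sameGene_symm _ _ (heq ▸ ldr_sameGene hy)
      have := T.sameGene_row _ _ hsg rfl
      simp only [Prod.mk.injEq] at this
      omega
    omega

/-- `kStd` gives an increasing tableau. -/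
noncomputable def toInc (hlam : IsPartitionFn lam) (T : GenomicTableau lam) :
    IncreasingTableau lam where
  entry := kStd T
  entry_pos := fun x hx => kStd_pos hlam hx
  entry_zero := fun x hx => by rw [kStd, if_neg hx]
  row_strict := fun r c₁ c₂ hc hy => by
    have hx : InShape lam (r, c₁) := inShape_left (le_of_lt hc) hy
    rw [kStd_eq hlam hx, kStd_eq hlam hy]
    have := rk_lt_rk (T := T) hlam (ldr_isLeader (T := T) hx) (glt_ldr_row (T := T) hlam hc hy)
    omega
  col_strict := fun r₁ r₂ c hr hy => by
    have hx : InShape lam (r₁, c) := lt_of_lt_of_le hy (hlam.1 (le_of_lt hr))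
    rw [kStd_eq hlam hx, kStd_eq hlam hy]
    have hglt : GLt T (ldr T (r₁, c)) (ldr T (r₂, c)) :=
      Or.inl (by rw [ldr_entry hx, ldr_entry hy]; exact T.col_strict r₁ r₂ c hr hy)
    have := rk_lt_rk (T := T) hlam (ldr_isLeader (T := T) hx) hglt
    omega

lemma toInc_gapless (hlam : IsPartitionFn lam) (T : GenomicTableau lam) :
    Gapless (toInc hlam T) := by
  intro i hi hle
  have hne : {n | ∃ x, InShape lam x ∧ (toInc hlam T).entry x = n}.Nonempty := by
    by_contra h
    rw [Set.not_nonempty_iff_eq_empty] at h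
    rw [maxEntryInc, h, csSup_empty] at hle
    exact absurd (Nat.le_zero.mp hle) (by omega)
  have hbd : ∀ n ∈ {n | ∃ x, InShape lam x ∧ (toInc hlam T).entry x = n}, n ≤ nG T := by
    rintro n ⟨x, hx, rfl⟩
    exact kStd_le_nG hlam hx
  have hmax : maxEntryInc (toInc hlam T) ≤ nG T := csSup_le hne hbd
  exact exists_kStd_eq hlam hi (le_trans hle hmax)

def DescF (lam : ℕ → ℕ) (f : ℕ × ℕ → ℕ) (v : ℕ) : Prop :=
  ∃ p q, InShape lam p ∧ InShape lam q ∧ f p = v ∧ f q = v + 1 ∧ p.1 < q.1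

lemma col_gt_of_entry_eq {p q : ℕ × ℕ} (hp : InShape lam p) (hq : InShape lam q)
    (he : T.entry p = T.entry q) (hr : p.1 < q.1) : q.2 < p.2 := by
  by_contra h
  push_neg at h
  obtain ⟨a, b⟩ := p
  obtain ⟨c, d⟩ := q
  have hm : InShape lam (c, b) := inShape_left h hq
  have h1 := T.col_strict a c b hr hm
  have h2 := T.row_weak c b d h hq
  omega

lemma glt_of_rk_lt (hlam : IsPartitionFn lam) {y z : ℕ × ℕ} (hy : IsGeneLeader T y)
    (hz : IsGeneLeader T z) (h : rk T y < rk T z) : GLt T y z := by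
  rcases GLt.trichotomy (T := T) hy.1 hz.1 with rfl | h' | h'
  · omega
  · exact h'
  · exact absurd (rk_lt_rk hlam hz h') (by omega)

lemma entry_le_of_kStd_le (hlam : IsPartitionFn lam) {x y : ℕ × ℕ} (hx : InShape lam x)
    (hy : InShape lam y) (h : kStd T x ≤ kStd T y) : T.entry x ≤ T.entry y := by
  rw [kStd_eq hlam hx, kStd_eq hlam hy] at h
  rcases eq_or_lt_of_le h with h' | h'
  · have heq := rk_injOn hlam (ldr_isLeader (T := T) hx) (ldr_isLeader (T := T) hy)
      (by omega)
    rw [← ldr_entry hx, ← ldr_entry hy, heq]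
  · have hg := glt_of_rk_lt hlam (ldr_isLeader (T := T) hx) (ldr_isLeader (T := T) hy)
      (by omega)
    rw [← ldr_entry hx, ← ldr_entry hy]
    rcases hg with h'' | ⟨h'', _⟩ <;> omega

lemma entry_succ_bound (hlam : IsPartitionFn lam) (hQY : IsQY T) {x y : ℕ × ℕ}
    (hx : InShape lam x) (hy : InShape lam y) (hv : kStd T y = kStd T x + 1) :
    T.entry x ≤ T.entry y ∧ T.entry y ≤ T.entry x + 1 := by
  have h1 : T.entry x ≤ T.entry y := entry_le_of_kStd_le hlam hx hy (by omega)
  refine ⟨h1, ?_⟩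
  by_contra h
  push_neg at h
  obtain ⟨z, hz, hze⟩ := qy_appears_of_le hQY (i := T.entry x + 1)
    (by have := T.entry_pos x hx; omega) (by omega) ⟨y, hy, rfl⟩
  have hg1 : GLt T (ldr T x) (ldr T z) :=
    Or.inl (by rw [ldr_entry hx, ldr_entry hz]; omega)
  have hg2 : GLt T (ldr T z) (ldr T y) :=
    Or.inl (by rw [ldr_entry hz, ldr_entry hy]; omega)
  have r1 := rk_lt_rk (T := T) hlam (ldr_isLeader (T := T) hx) hg1
  have r2 := rk_lt_rk (T := T) hlam (ldr_isLeader (T := T) hz) hg2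
  rw [kStd_eq hlam hx, kStd_eq hlam hy] at hv
  omega

lemma desc_imp (hlam : IsPartitionFn lam) (hQY : IsQY T) {x y : ℕ × ℕ}
    (hx : InShape lam x) (hy : InShape lam y) (hv : kStd T y = kStd T x + 1)
    (hd : DescF lam (kStd T) (kStd T x)) : T.entry y = T.entry x + 1 := by
  obtain ⟨h1, h2⟩ := entry_succ_bound hlam hQY hx hy hv
  rcases eq_or_lt_of_le h1 with he | he
  swap
  · omega
  exfalso
  obtain ⟨p, q, hp, hq, hpv, hqv, hpq⟩ := hd
  have hsgpx : T.sameGene p x := (sameGene_iff_kStd hlam hp hx).mpr hpv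
  have hsgqy : T.sameGene q y := (sameGene_iff_kStd hlam hq hy).mpr (by rw [hqv, hv])
  have hep : T.entry p = T.entry x := T.sameGene_entry _ _ hsgpx
  have heq' : T.entry q = T.entry y := T.sameGene_entry _ _ hsgqy
  have hqp : q.2 < p.2 := col_gt_of_entry_eq (T := T) hp hq (by omega) hpq
  have hrk : rk T (ldr T x) < rk T (ldr T y) := by
    rw [kStd_eq hlam hx, kStd_eq hlam hy] at hv; omega
  have hg : GLt T (ldr T x) (ldr T y) :=
    glt_of_rk_lt hlam (ldr_isLeader (T := T) hx) (ldr_isLeader (T := T) hy) hrk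
  have hcols : (ldr T x).2 < (ldr T y).2 := by
    rcases hg with hg | ⟨_, hg⟩
    · rw [ldr_entry hx, ldr_entry hy] at hg; omega
    · exact hg
  have hlq : (ldr T y).2 ≤ q.2 := by
    rw [ldr_eq_of_sameGene (T.sameGene_symm _ _ hsgqy)]
    exact ldr_min hq q (T.sameGene_refl q hq)
  have hlpx : ldr T p = ldr T x := ldr_eq_of_sameGene hsgpx
  have hmid := T.sameGene_interval (ldr T p) q p
    (T.sameGene_symm _ _ (ldr_sameGene hp)) hq
    (by rw [ldr_entry hp]; omega) (by rw [hlpx]; omega) hqp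
  have : T.sameGene p q := T.sameGene_trans _ _ _ (ldr_sameGene hp) hmid
  have := (sameGene_iff_kStd hlam hp hq).mp this
  omega

lemma imp_desc (hlam : IsPartitionFn lam) (hQY : IsQY T) {x y : ℕ × ℕ}
    (hx : InShape lam x) (hy : InShape lam y) (hv : kStd T y = kStd T x + 1)
    (he : T.entry y = T.entry x + 1) : DescF lam (kStd T) (kStd T x) := by
  set i := T.entry x with hi
  have hipos : 1 ≤ i := T.entry_pos x hx
  obtain ⟨a, b, ha, hb, hae, hbe, hab⟩ := hQY (i + 1) (by omega) ⟨y, hy, he⟩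
  have hbe' : T.entry b = i := by omega
  -- rightmost entry-i box
  set S1 := {z : ℕ × ℕ | InShape lam z ∧ T.entry z = i} with hS1
  have hS1fin : S1.Finite := (shape_finite hlam).subset fun z hz => hz.1
  have hC1fin : (Prod.snd '' S1).Finite := hS1fin.image _
  have hC1bdd : BddAbove (Prod.snd '' S1) := hC1fin.bddAbove
  have hC1ne : (Prod.snd '' S1).Nonempty := ⟨b.2, b, ⟨hb, hbe'⟩, rfl⟩
  obtain ⟨xs, hxsS, hxs2⟩ := Nat.sSup_mem hC1ne hC1bdd
  have hxsmax : ∀ z ∈ S1, z.2 ≤ xs.2 := fun z hz => by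
    rw [hxs2]; exact le_csSup hC1bdd ⟨z, hz, rfl⟩
  -- leftmost entry-(i+1) box
  set C2 := {c : ℕ | ∃ z, InShape lam z ∧ T.entry z = i + 1 ∧ z.2 = c} with hC2
  have hC2ne : C2.Nonempty := ⟨a.2, a, ha, hae, rfl⟩
  obtain ⟨ys, hys, hyse, hys2⟩ := Nat.sInf_mem hC2ne
  have hysmin : ∀ z, InShape lam z → T.entry z = i + 1 → ys.2 ≤ z.2 := fun z hz hze => by
    rw [hys2]; exact Nat.sInf_le ⟨z, hz, hze, rfl⟩
  have hxy2 : ys.2 ≤ xs.2 := le_trans (le_trans (hysmin a ha hae) hab) (hxsmax b ⟨hb, hbe'⟩)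
  have hrow : xs.1 < ys.1 :=
    row_lt_of_entry_lt (T := T) hxsS.1 hys (by rw [hxsS.2, hyse]; omega) hxy2
  -- xs is in the gene of x
  have hrkxy : rk T (ldr T y) = rk T (ldr T x) + 1 := by
    rw [kStd_eq hlam hx, kStd_eq hlam hy] at hv; omega
  have hsgx : T.sameGene x xs := by
    have hgl1 : GLt T (ldr T xs) (ldr T y) :=
      Or.inl (by rw [ldr_entry hxsS.1, ldr_entry hy, hxsS.2]; omega)
    have hr1 := rk_lt_rk (T := T) hlam (ldr_isLeader (T := T) hxsS.1) hgl1
    rcases eq_or_lt_of_le (show rk T (ldr T xs) ≤ rk T (ldr T x) by omega) with hr | hr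
    · have heq := rk_injOn hlam (ldr_isLeader (T := T) hxsS.1) (ldr_isLeader (T := T) hx) hr
      exact T.sameGene_trans _ _ _ (ldr_sameGene hx)
        (heq ▸ T.sameGene_symm _ _ (ldr_sameGene hxsS.1))
    · have hg := glt_of_rk_lt hlam (ldr_isLeader (T := T) hxsS.1) (ldr_isLeader (T := T) hx) hr
      have hcol : (ldr T xs).2 < (ldr T x).2 := by
        rcases hg with hg | ⟨_, hg⟩
        · rw [ldr_entry hxsS.1, ldr_entry hx, hxsS.2] at hg; omega
        · exact hg
      have hlxmax : (ldr T x).2 ≤ xs.2 := hxsmax _ ⟨ldr_mem hx, by rw [ldr_entry hx]⟩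
      rcases eq_or_lt_of_le hlxmax with hc | hc
      · have heq : ldr T x = xs := eq_of_entry_col (ldr_mem hx) hxsS.1
          (by rw [ldr_entry hx, hxsS.2]) hc
        exact heq ▸ ldr_sameGene hx
      · have hmid := T.sameGene_interval (ldr T xs) (ldr T x) xs
          (T.sameGene_symm _ _ (ldr_sameGene hxsS.1)) (ldr_mem hx)
          (by rw [ldr_entry hx, ldr_entry hxsS.1, hxsS.2]) hcol hc
        exact T.sameGene_trans _ _ _ (ldr_sameGene hx)
          (T.sameGene_trans _ _ _ (T.sameGene_symm _ _ hmid)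
            (T.sameGene_symm _ _ (ldr_sameGene hxsS.1)))
  -- ys is in the gene of y
  have hsgy : T.sameGene y ys := by
    have hgl2 : GLt T (ldr T x) (ldr T ys) :=
      Or.inl (by rw [ldr_entry hx, ldr_entry hys, hyse]; omega)
    have hr2 := rk_lt_rk (T := T) hlam (ldr_isLeader (T := T) hx) hgl2
    rcases eq_or_lt_of_le (show rk T (ldr T y) ≤ rk T (ldr T ys) by omega) with hr | hr
    · have heq := rk_injOn hlam (ldr_isLeader (T := T) hy) (ldr_isLeader (T := T) hys) hr
      exact T.sameGene_trans _ _ _ (ldr_sameGene hy)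
        (heq ▸ T.sameGene_symm _ _ (ldr_sameGene hys))
    · exfalso
      have hg := glt_of_rk_lt hlam (ldr_isLeader (T := T) hy) (ldr_isLeader (T := T) hys) hr
      have hcol : (ldr T y).2 < (ldr T ys).2 := by
        rcases hg with hg | ⟨_, hg⟩
        · rw [ldr_entry hy, ldr_entry hys, hyse] at hg; omega
        · exact hg
      have h1 : (ldr T ys).2 ≤ ys.2 := ldr_min hys ys (T.sameGene_refl ys hys)
      have h2 : ys.2 ≤ (ldr T y).2 := hysmin _ (ldr_mem hy) (by rw [ldr_entry hy]; omega)
      omega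
  exact ⟨xs, ys, hxsS.1, hys,
    by rw [← (sameGene_iff_kStd hlam hx hxsS.1).mp hsgx],
    by rw [← (sameGene_iff_kStd hlam hy hys).mp hsgy, hv], hrow⟩

lemma step_entry (hlam : IsPartitionFn lam) (hQY : IsQY T) {x y : ℕ × ℕ}
    (hx : InShape lam x) (hy : InShape lam y) (hv : kStd T y = kStd T x + 1) :
    T.entry y = if DescF lam (kStd T) (kStd T x) then T.entry x + 1 else T.entry x := by
  split_ifs with hd
  · exact desc_imp hlam hQY hx hy hv hd
  · obtain ⟨h1, h2⟩ := entry_succ_bound hlam hQY hx hy hv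
    rcases eq_or_lt_of_le h1 with he | he
    · omega
    · exact absurd (imp_desc hlam hQY hx hy hv (by omega)) hd

lemma kStd_one_entry (hlam : IsPartitionFn lam) (hQY : IsQY T) {x : ℕ × ℕ}
    (hx : InShape lam x) (h : kStd T x = 1) : T.entry x = 1 := by
  have hmin : ∀ z, InShape lam z → T.entry x ≤ T.entry z := by
    intro z hz
    by_contra hc
    push_neg at hc
    have hg : GLt T (ldr T z) (ldr T x) :=
      Or.inl (by rw [ldr_entry hx, ldr_entry hz]; omega)
    have := rk_lt_rk (T := T) hlam (ldr_isLeader (T := T) hz) hg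
    rw [kStd_eq hlam hx] at h
    omega
  have hp := T.entry_pos x hx
  by_contra hne
  obtain ⟨a, b, ha, hb, hae, hbe, hab⟩ := hQY (T.entry x) (by omega) ⟨x, hx, rfl⟩
  have h1 := hmin b hb
  omega

lemma gt_ext {T T' : GenomicTableau lam} (he : T.entry = T'.entry)
    (hs : T.sameGene = T'.sameGene) : T = T' := by
  obtain ⟨e, s, p1, p2, p3, p4, p5, p6, p7, p8, p9, p10, p11⟩ := T
  obtain ⟨e', s', q1, q2, q3, q4, q5, q6, q7, q8, q9, q10, q11⟩ := T'
  dsimp only at he hs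
  subst he; subst hs; rfl

lemma entry_eq_of_kStd_eq (hlam : IsPartitionFn lam) {T T' : GenomicTableau lam}
    (hQ : IsQY T) (hQ' : IsQY T') (h : kStd T = kStd T') :
    ∀ x, InShape lam x → T.entry x = T'.entry x := by
  suffices H : ∀ v x, InShape lam x → kStd T x = v → T.entry x = T'.entry x by
    intro x hx; exact H (kStd T x) x hx rfl
  intro v
  induction v using Nat.strong_induction_on with
  | _ v ih =>
  intro x hx hv
  have hx' : kStd T' x = v := by rw [← h]; exact hv
  have hv1 : 1 ≤ v := hv ▸ kStd_pos hlam hx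
  rcases eq_or_lt_of_le hv1 with h1 | h1
  · rw [kStd_one_entry hlam hQ hx (by omega), kStd_one_entry hlam hQ' hx (by omega)]
  · obtain ⟨p, hp, hpv⟩ := exists_kStd_eq (T := T) hlam (k := v - 1) (by omega)
      (by have := kStd_le_nG (T := T) hlam hx; omega)
    have hpv' : kStd T' p = v - 1 := by rw [← h]; exact hpv
    have key := step_entry hlam hQ hp hx (by omega)
    have key' := step_entry (T := T') hlam hQ' hp hx (by omega)
    rw [hpv] at key
    rw [hpv', ← h] at key'
    rw [ih (v - 1) (by omega) p hp hpv] at key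
    rw [key, key']

lemma inc_lt {U : IncreasingTableau lam} {r1 c1 r2 c2 : ℕ} (h : InShape lam (r2, c2))
    (hr : r1 ≤ r2) (hc : c1 ≤ c2) (hne : (r1, c1) ≠ (r2, c2)) :
    U.entry (r1, c1) < U.entry (r2, c2) := by
  rcases eq_or_lt_of_le hr with rfl | hr'
  · rcases eq_or_lt_of_le hc with rfl | hc'
    · exact absurd rfl hne
    · exact U.row_strict r1 c1 c2 hc' h
  · rcases eq_or_lt_of_le hc with rfl | hc'
    · exact U.col_strict r1 r2 c1 hr' h
    · have hm : InShape lam (r2, c1) := inShape_left (le_of_lt hc') h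
      exact lt_trans (U.col_strict r1 r2 c1 hr' hm) (U.row_strict r2 c1 c2 hc' h)

lemma inc_lt' {U : IncreasingTableau lam} {p q : ℕ × ℕ} (h : InShape lam q)
    (hr : p.1 ≤ q.1) (hc : p.2 ≤ q.2) (hne : p ≠ q) : U.entry p < U.entry q := by
  obtain ⟨a, b⟩ := p
  obtain ⟨c, d⟩ := q
  exact inc_lt h hr hc hne

lemma inc_antichain {U : IncreasingTableau lam} {p q : ℕ × ℕ} (hq : InShape lam q)
    (hr : p.1 < q.1) (hc : p.2 < q.2) : U.entry p + 2 ≤ U.entry q := by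
  obtain ⟨a, b⟩ := p
  obtain ⟨c, d⟩ := q
  have hm : InShape lam (c, b) := inShape_left (le_of_lt hc) hq
  have h1 := U.col_strict a c b hr hm
  have h2 := U.row_strict c b d hc hq
  omega

lemma entry_le_maxInc (hlam : IsPartitionFn lam) {U : IncreasingTableau lam} {x : ℕ × ℕ}
    (hx : InShape lam x) : U.entry x ≤ maxEntryInc U := by
  have hfin : {n | ∃ x, InShape lam x ∧ U.entry x = n}.Finite := by
    apply ((shape_finite hlam).image U.entry).subset
    rintro n ⟨z, hz, rfl⟩
    exact ⟨z, hz, rfl⟩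
  exact le_csSup hfin.bddAbove ⟨x, hx, rfl⟩

lemma exists_descent_between (hlam : IsPartitionFn lam) {U : IncreasingTableau lam}
    (hgl : Gapless U) :
    ∀ b p q, InShape lam p → InShape lam q → U.entry q = b → U.entry p < b → p.1 < q.1 →
      ∃ j, U.entry p ≤ j ∧ j < b ∧ IsDescent U j := by
  intro b
  induction b using Nat.strong_induction_on with
  | _ b ih =>
  intro p q hp hq hqb hpb hr
  have hppos : 1 ≤ U.entry p := U.entry_pos p hp
  by_cases hd : IsDescent U (b - 1)
  · exact ⟨b - 1, by omega, by omega, hd⟩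
  · rcases eq_or_lt_of_le (show U.entry p ≤ b - 1 by omega) with he | hlt
    · exact absurd ⟨p, q, hp, hq, he, by omega, hr⟩ hd
    · obtain ⟨s, hs, hse⟩ := hgl (b - 1) (by omega)
        (le_trans (by omega) (hqb ▸ entry_le_maxInc hlam hq))
      have hqs : q.1 ≤ s.1 := by
        by_contra hcon
        push_neg at hcon
        exact hd ⟨s, q, hs, hq, hse, by omega, hcon⟩
      obtain ⟨j, hj1, hj2, hj3⟩ := ih (b - 1) (by omega) p s hp hs hse (by omega)
        (lt_of_lt_of_le hr hqs)
      exact ⟨j, hj1, by omega, hj3⟩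

noncomputable def eC (U : IncreasingTableau lam) (v : ℕ) : ℕ :=
  1 + ((Finset.Ico 1 v).filter (fun j => IsDescent U j)).card

lemma eC_mono {U : IncreasingTableau lam} : Monotone (eC U) := fun a b hab => by
  apply Nat.add_le_add_left
  exact Finset.card_le_card (Finset.filter_subset_filter _ (Finset.Ico_subset_Ico le_rfl hab))

lemma eC_pos {U : IncreasingTableau lam} (v : ℕ) : 1 ≤ eC U v := Nat.le_add_right 1 _

lemma eC_one {U : IncreasingTableau lam} : eC U 1 = 1 := by simp [eC]

lemma eC_succ {U : IncreasingTableau lam} {v : ℕ} (hv : 1 ≤ v) :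
    eC U (v + 1) = eC U v + if IsDescent U v then 1 else 0 := by
  rw [eC, eC, Nat.Ico_succ_right_eq_insert_Ico hv, Finset.filter_insert]
  split_ifs with h
  · rw [Finset.card_insert_of_notMem (by simp)]
    omega
  · omega

lemma eC_lt_of_desc {U : IncreasingTableau lam} {u v j : ℕ} (hu : 1 ≤ u) (h1 : u ≤ j)
    (h2 : j < v) (hd : IsDescent U j) : eC U u < eC U v := by
  have ha : eC U u ≤ eC U j := eC_mono h1
  have hb : eC U (j + 1) = eC U j + 1 := by rw [eC_succ (le_trans hu h1), if_pos hd]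
  have hc : eC U (j + 1) ≤ eC U v := eC_mono (by omega)
  omega

lemma no_desc_of_eC_eq {U : IncreasingTableau lam} {u v : ℕ} (hu : 1 ≤ u)
    (he : eC U u = eC U v) : ∀ j, u ≤ j → j < v → ¬IsDescent U j :=
  fun j h1 h2 hd => absurd he (eC_lt_of_desc hu h1 h2 hd).ne

noncomputable def stdInv (hlam : IsPartitionFn lam) (U : IncreasingTableau lam)
    (hgl : Gapless U) : GenomicTableau lam where
  entry := fun x => if InShape lam x then eC U (U.entry x) else 0
  sameGene := fun x y => InShape lam x ∧ InShape lam y ∧ U.entry x = U.entry y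
  entry_pos := fun x hx => by rw [if_pos hx]; exact eC_pos _
  entry_zero := fun x hx => if_neg hx
  row_weak := fun r c₁ c₂ hc hy => by
    have hx : InShape lam (r, c₁) := inShape_left hc hy
    rw [if_pos hx, if_pos hy]
    rcases eq_or_lt_of_le hc with rfl | hc'
    · exact le_rfl
    · exact eC_mono (le_of_lt (U.row_strict r c₁ c₂ hc' hy))
  col_strict := fun r₁ r₂ c hr hy => by
    have hx : InShape lam (r₁, c) := lt_of_lt_of_le hy (hlam.1 (le_of_lt hr))
    rw [if_pos hx, if_pos hy]
    obtain ⟨j, hj1, hj2, hjd⟩ := exists_descent_between hlam hgl (U.entry (r₂, c))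
      (r₁, c) (r₂, c) hx hy rfl (U.col_strict r₁ r₂ c hr hy) hr
    exact eC_lt_of_desc (U.entry_pos _ hx) hj1 hj2 hjd
  sameGene_mem := fun x y h => ⟨h.1, h.2.1⟩
  sameGene_refl := fun x hx => ⟨hx, hx, rfl⟩
  sameGene_symm := fun x y h => ⟨h.2.1, h.1, h.2.2.symm⟩
  sameGene_trans := fun x y z h h' => ⟨h.1, h'.2.1, h.2.2.trans h'.2.2⟩
  sameGene_entry := fun x y h => by rw [if_pos h.1, if_pos h.2.1, h.2.2]
  sameGene_interval := fun x y z h hy hey h1 h2 => by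
    obtain ⟨hx, hz, hxz⟩ := h
    refine ⟨hx, hy, ?_⟩
    rw [if_pos hy, if_pos hx] at hey
    have hxnz : x ≠ z := fun he => absurd (congrArg Prod.snd he) (h1.trans h2).ne
    have hzx : z.1 < x.1 := by
      by_contra hcon
      push_neg at hcon
      have := inc_lt' (U := U) hz hcon (le_of_lt (h1.trans h2)) hxnz
      omega
    rcases lt_trichotomy (U.entry y) (U.entry x) with hlt | heq | hgt
    · exfalso
      have hnd := no_desc_of_eC_eq (U := U) (U.entry_pos y hy) hey
      have hyx : x.1 ≤ y.1 := by
        by_contra hcon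
        push_neg at hcon
        obtain ⟨j, hj1, hj2, hjd⟩ := exists_descent_between hlam hgl (U.entry x) y x
          hy hx rfl hlt hcon
        exact hnd j hj1 hj2 hjd
      have := inc_lt' (U := U) hy hyx (le_of_lt h1)
        (fun he => absurd (congrArg Prod.snd he) h1.ne)
      omega
    · exact heq.symm
    · exfalso
      have hnd := no_desc_of_eC_eq (U := U) (U.entry_pos x hx) hey.symm
      have hzy : y.1 ≤ z.1 := by
        by_contra hcon
        push_neg at hcon
        obtain ⟨j, hj1, hj2, hjd⟩ := exists_descent_between hlam hgl (U.entry y) z y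
          hz hy rfl (hxz ▸ hgt) hcon
        exact hnd j (by omega) hj2 hjd
      have := inc_lt' (U := U) hz hzy (le_of_lt h2)
        (fun he => absurd (congrArg Prod.snd he) h2.ne)
      omega
  sameGene_row := fun x y h hr => by
    obtain ⟨hx, hy, hU⟩ := h
    obtain ⟨a, b⟩ := x
    obtain ⟨c, d⟩ := y
    simp only at hr
    subst hr
    rcases lt_trichotomy b d with h' | h' | h'
    · exact absurd (U.row_strict a b d h' hy) (by omega)
    · rw [h']
    · exact absurd (U.row_strict a d b h' hx) (by omega)

lemma stdInv_entry (hlam : IsPartitionFn lam) (U : IncreasingTableau lam) (hgl : Gapless U)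
    (x : ℕ × ℕ) :
    (stdInv hlam U hgl).entry x = if InShape lam x then eC U (U.entry x) else 0 := rfl

lemma stdInv_sameGene (hlam : IsPartitionFn lam) (U : IncreasingTableau lam) (hgl : Gapless U)
    (x y : ℕ × ℕ) : (stdInv hlam U hgl).sameGene x y ↔
      InShape lam x ∧ InShape lam y ∧ U.entry x = U.entry y := Iff.rfl

lemma stdInv_qy (hlam : IsPartitionFn lam) (U : IncreasingTableau lam) (hgl : Gapless U) :
    IsQY (stdInv hlam U hgl) := by
  rintro i hi ⟨w, hw, hwe⟩
  rw [stdInv_entry, if_pos hw] at hwe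
  set S : Set ℕ := {u | 1 ≤ u ∧ eC U u = i} with hS
  have hSne : S.Nonempty := ⟨U.entry w, U.entry_pos w hw, hwe⟩
  obtain ⟨hu1, hu2⟩ := Nat.sInf_mem hSne
  set u₀ := sInf S with hu₀
  have h2 : 2 ≤ u₀ := by
    rcases eq_or_lt_of_le hu1 with h | h
    · exfalso
      rw [← h, eC_one] at hu2
      omega
    · omega
  have hstep : eC U (u₀ - 1 + 1) = eC U (u₀ - 1) + if IsDescent U (u₀ - 1) then 1 else 0 :=
    eC_succ (by omega)
  rw [show u₀ - 1 + 1 = u₀ by omega] at hstep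
  have hne : eC U (u₀ - 1) ≠ i := by
    intro hcon
    have : u₀ ≤ u₀ - 1 := Nat.sInf_le ⟨by omega, hcon⟩
    omega
  have hd : IsDescent U (u₀ - 1) := by
    by_contra hcon
    rw [if_neg hcon] at hstep
    omega
  rw [if_pos hd] at hstep
  obtain ⟨p, q, hp, hq, hpe, hqe, hpq⟩ := hd
  have hqp2 : q.2 ≤ p.2 := by
    by_contra hcon
    push_neg at hcon
    have := inc_antichain (U := U) hq hpq hcon
    omega
  refine ⟨q, p, hq, hp, ?_, ?_, hqp2⟩
  · rw [stdInv_entry, if_pos hq, hqe, show u₀ - 1 + 1 = u₀ by omega, hu2]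
  · rw [stdInv_entry, if_pos hp, hpe]
    omega

lemma stdInv_leader_iff (hlam : IsPartitionFn lam) (U : IncreasingTableau lam)
    (hgl : Gapless U) {y : ℕ × ℕ} : IsGeneLeader (stdInv hlam U hgl) y ↔
    InShape lam y ∧ ∀ z, InShape lam z → U.entry z = U.entry y → y.2 ≤ z.2 := by
  constructor
  · rintro ⟨hy, hmin⟩
    exact ⟨hy, fun z hz hze => hmin z ⟨hy, hz, hze.symm⟩⟩
  · rintro ⟨hy, hmin⟩
    exact ⟨hy, fun z hsg => hmin z hsg.2.1 hsg.2.2.symm⟩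

lemma fib_exists (hlam : IsPartitionFn lam) (U : IncreasingTableau lam) (hgl : Gapless U)
    {v : ℕ} (hv1 : 1 ≤ v) (hv2 : v ≤ maxEntryInc U) :
    ∃ y, IsGeneLeader (stdInv hlam U hgl) y ∧ U.entry y = v := by
  obtain ⟨w, hw, hwe⟩ := hgl v hv1 hv2
  have hCne : {c | ∃ z, InShape lam z ∧ U.entry z = v ∧ z.2 = c}.Nonempty :=
    ⟨w.2, w, hw, hwe, rfl⟩
  obtain ⟨y, hy, hye, hy2⟩ := Nat.sInf_mem hCne
  refine ⟨y, (stdInv_leader_iff hlam U hgl).mpr ⟨hy, fun z hz hze => ?_⟩, hye⟩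
  rw [hy2]
  exact Nat.sInf_le ⟨z, hz, hze.trans hye, rfl⟩

lemma fib_unique (hlam : IsPartitionFn lam) (U : IncreasingTableau lam) (hgl : Gapless U)
    {y y' : ℕ × ℕ} (hy : IsGeneLeader (stdInv hlam U hgl) y)
    (hy' : IsGeneLeader (stdInv hlam U hgl) y') (he : U.entry y = U.entry y') : y = y' := by
  rw [stdInv_leader_iff hlam U hgl] at hy hy'
  have h1 : y.2 ≤ y'.2 := hy.2 y' hy'.1 he.symm
  have h2 : y'.2 ≤ y.2 := hy'.2 y hy.1 he
  have hc : y.2 = y'.2 := le_antisymm h1 h2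
  by_contra hne
  rcases lt_trichotomy y.1 y'.1 with h | h | h
  · exact absurd (inc_lt' (U := U) hy'.1 (le_of_lt h) (le_of_eq hc) hne) (by omega)
  · exact hne (Prod.ext h hc)
  · exact absurd (inc_lt' (U := U) hy.1 (le_of_lt h) (le_of_eq hc.symm) (Ne.symm hne))
      (by omega)

lemma fib_order (hlam : IsPartitionFn lam) (U : IncreasingTableau lam) (hgl : Gapless U)
    {y z : ℕ × ℕ} (hy : IsGeneLeader (stdInv hlam U hgl) y)
    (hz : IsGeneLeader (stdInv hlam U hgl) z) (hUyz : U.entry y < U.entry z) :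
    GLt (stdInv hlam U hgl) y z := by
  have hym := hy.1
  have hzm := hz.1
  have hm : eC U (U.entry y) ≤ eC U (U.entry z) := eC_mono (le_of_lt hUyz)
  rcases eq_or_lt_of_le hm with he | hlt
  · right
    refine ⟨by rw [stdInv_entry, stdInv_entry, if_pos hym, if_pos hzm, he], ?_⟩
    have hnd := no_desc_of_eC_eq (U := U) (U.entry_pos y hym) he
    have hrow : z.1 ≤ y.1 := by
      by_contra hcon
      push_neg at hcon
      obtain ⟨j, hj1, hj2, hjd⟩ := exists_descent_between hlam hgl (U.entry z) y z
        hym hzm rfl hUyz hcon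
      exact hnd j hj1 hj2 hjd
    by_contra hcol
    push_neg at hcol
    have := inc_lt' (U := U) hym hrow hcol (fun hc => absurd (congrArg U.entry hc) (by omega))
    omega
  · left
    rw [stdInv_entry, stdInv_entry, if_pos hym, if_pos hzm]
    exact hlt

noncomputable def fibLdr (hlam : IsPartitionFn lam) (U : IncreasingTableau lam)
    (hgl : Gapless U) (v : ℕ) : ℕ × ℕ :=
  if h : ∃ y, IsGeneLeader (stdInv hlam U hgl) y ∧ U.entry y = v then h.choose else (0, 0)

lemma fibLdr_spec (hlam : IsPartitionFn lam) (U : IncreasingTableau lam) (hgl : Gapless U)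
    {v : ℕ} (hv1 : 1 ≤ v) (hv2 : v ≤ maxEntryInc U) :
    IsGeneLeader (stdInv hlam U hgl) (fibLdr hlam U hgl v) ∧
      U.entry (fibLdr hlam U hgl v) = v := by
  rw [fibLdr, dif_pos (fib_exists hlam U hgl hv1 hv2)]
  exact (fib_exists hlam U hgl hv1 hv2).choose_spec

lemma fibLdr_eq (hlam : IsPartitionFn lam) (U : IncreasingTableau lam) (hgl : Gapless U)
    {y : ℕ × ℕ} (hy : IsGeneLeader (stdInv hlam U hgl) y) :
    fibLdr hlam U hgl (U.entry y) = y := by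
  have hex : ∃ y', IsGeneLeader (stdInv hlam U hgl) y' ∧ U.entry y' = U.entry y :=
    ⟨y, hy, rfl⟩
  rw [fibLdr, dif_pos hex]
  exact fib_unique hlam U hgl hex.choose_spec.1 hy hex.choose_spec.2

lemma kStd_stdInv (hlam : IsPartitionFn lam) (U : IncreasingTableau lam) (hgl : Gapless U)
    (x : ℕ × ℕ) : kStd (stdInv hlam U hgl) x = U.entry x := by
  set T := stdInv hlam U hgl with hT
  by_cases hx : InShape lam x
  swap
  · rw [kStd, if_neg hx, U.entry_zero x hx]
  rw [kStd, if_pos hx]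
  have hsgℓ : T.sameGene x (ldr T x) := ldr_sameGene hx
  have hUℓ : U.entry (ldr T x) = U.entry x :=
    ((stdInv_sameGene hlam U hgl x (ldr T x)).mp hsgℓ).2.2.symm
  have hLℓ : IsGeneLeader T (ldr T x) := ldr_isLeader hx
  have hlc : leadCol T x = (ldr T x).2 := leadCol_eq hx
  have heℓ : T.entry (ldr T x) = T.entry x := ldr_entry hx
  have hset : {y | IsGeneLeader T y ∧ (T.entry y < T.entry x ∨
      (T.entry y = T.entry x ∧ y.2 ≤ leadCol T x))}
      = fibLdr hlam U hgl '' Set.Icc 1 (U.entry x) := by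
    ext y
    simp only [Set.mem_setOf_eq, Set.mem_image, Set.mem_Icc]
    constructor
    · rintro ⟨hy, hcond⟩
      have hUy : U.entry y ≤ U.entry x := by
        by_contra hcon
        push_neg at hcon
        have hg := fib_order hlam U hgl hLℓ hy (by omega)
        rw [← hT] at hg
        rcases hcond with hc | ⟨hc, hc2⟩ <;> rcases hg with hg | ⟨hg, hg2⟩
        · rw [heℓ] at hg; omega
        · rw [heℓ] at hg; omega
        · rw [heℓ] at hg; omega
        · rw [hlc] at hc2; omega
      exact ⟨U.entry y, ⟨U.entry_pos y hy.1, hUy⟩, fibLdr_eq hlam U hgl hy⟩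
    · rintro ⟨v, ⟨hv1, hv2⟩, rfl⟩
      have hvmax : v ≤ maxEntryInc U := le_trans hv2 (entry_le_maxInc hlam hx)
      obtain ⟨hfl, hfe⟩ := fibLdr_spec hlam U hgl hv1 hvmax
      refine ⟨hfl, ?_⟩
      rcases eq_or_lt_of_le hv2 with he | hlt'
      · have hefℓ : fibLdr hlam U hgl v = ldr T x :=
          fib_unique hlam U hgl hfl hLℓ (by rw [hfe, hUℓ, he])
      
        right
        rw [hefℓ]
        exact ⟨heℓ, hlc ▸ le_rfl⟩
      · have hg := fib_order hlam U hgl hfl hLℓ (by omega)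
        rw [← hT] at hg
        rcases hg with hg | ⟨hg, hg2⟩
        · left
          rw [← heℓ]
          exact hg
        · right
          exact ⟨hg.trans heℓ, by rw [hlc]; exact le_of_lt hg2⟩
  rw [hset]
  have hinj : Set.InjOn (fibLdr hlam U hgl) (Set.Icc 1 (U.entry x)) := by
    intro v hv w hw h
    simp only [Set.mem_Icc] at hv hw
    have hvm : v ≤ maxEntryInc U := le_trans hv.2 (entry_le_maxInc hlam hx)
    have hwm : w ≤ maxEntryInc U := le_trans hw.2 (entry_le_maxInc hlam hx)
    rw [← (fibLdr_spec hlam U hgl hv.1 hvm).2, ← (fibLdr_spec hlam U hgl hw.1 hwm).2, h]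
  rw [Set.ncard_image_of_injOn hinj, ← Finset.coe_Icc, Set.ncard_coe_finset, Nat.card_Icc]
  omega

end KStdProof

/-- **Proposition.** For any partition `λ`, the K-standardization map `Φ` restricts to a
bijection from the set `QYGen(λ)` of quasiYamanouchi genomic tableaux of shape `λ` onto the
set `Inc_gl(λ)` of gapless increasing tableaux of shape `λ` (identified here with their
entry functions). -/
theorem kStd_bijOn_qy_gaplessInc (lam : ℕ → ℕ) (hlam : IsPartitionFn lam) :
    Set.BijOn (fun T : GenomicTableau lam => kStd T)
      {T : GenomicTableau lam | IsQY T}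
      {f : ℕ × ℕ → ℕ | ∃ T : IncreasingTableau lam, Gapless T ∧ T.entry = f} := by
  refine ⟨?_, ?_, ?_⟩
  · intro T hT
    exact ⟨toInc hlam T, toInc_gapless hlam T, rfl⟩
  · intro T hT T' hT' h
    have h' : kStd T = kStd T' := h
    have hQ : IsQY T := hT
    have hQ' : IsQY T' := hT'
    apply gt_ext
    · funext x
      by_cases hx : InShape lam x
      · exact entry_eq_of_kStd_eq hlam hQ hQ' h' x hx
      · rw [T.entry_zero x hx, T'.entry_zero x hx]
    · funext x y
      apply propext
      constructor
      · intro hs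
        obtain ⟨hx, hy⟩ := T.sameGene_mem x y hs
        refine (sameGene_iff_kStd hlam hx hy).mpr ?_
        rw [← congrFun h' x, ← congrFun h' y]
        exact (sameGene_iff_kStd hlam hx hy).mp hs
      · intro hs
        obtain ⟨hx, hy⟩ := T'.sameGene_mem x y hs
        refine (sameGene_iff_kStd hlam hx hy).mpr ?_
        rw [congrFun h' x, congrFun h' y]
        exact (sameGene_iff_kStd hlam hx hy).mp hs
  · rintro f ⟨U, hgl, rfl⟩
    exact ⟨stdInv hlam U hgl, stdInv_qy hlam U hgl, funext (kStd_stdInv hlam U hgl)⟩
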